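/- Under the hypotheses of the φ-induction (â_k ≤ C M^k for n₀ < k ≤ n, with 2n₀ < n), the convolution satisfies Σ_{k=1}^{n} â_k â_{n+1−k} ≤ (2 Σ_{k=1}^{n₀} â_k M^{−k} + n C) · C M^{n+1}. -/

import Mathlib

open Finset

theorem stmt_14 (a : ℕ → ℝ) (ha : ∀ k, 0 ≤ a k)
    (C M : ℝ) (hC : 0 < C) (hM : 0 < M)
    (n0 n : ℕ) (hn : 2 * n0 < n)
    (hbd : ∀ k, n0 < k → k ≤ n → a k ≤ C * M ^ k) :
    ∑ k ∈ Icc 1 n, a k * a (n + 1 - k) ≤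
      (2 * ∑ k ∈ Icc 1 n0, a k * (M : ℝ)⁻¹ ^ k + (n : ℝ) * C) * (C * M ^ (n + 1)) := by
  have hMne : (M : ℝ) ≠ 0 := hM.ne'
  -- pointwise bound near the boundary
  have key : ∀ k, 0 < k → k ≤ n0 →
      a k * a (n + 1 - k) ≤ a k * (M : ℝ)⁻¹ ^ k * (C * M ^ (n + 1)) := by
    intro k hk1 hk2
    have h1 : n0 < n + 1 - k := by omega
    have h2 : n + 1 - k ≤ n := by omega
    have hb := hbd (n + 1 - k) h1 h2
    have hpow : M ^ (n + 1 - k) = M ^ (n + 1) / M ^ k := by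
      rw [eq_div_iff (pow_ne_zero k hMne), ← pow_add]
      congr 1
      omega
    calc a k * a (n + 1 - k) ≤ a k * (C * M ^ (n + 1 - k)) :=
          mul_le_mul_of_nonneg_left hb (ha k)
      _ = a k * (M : ℝ)⁻¹ ^ k * (C * M ^ (n + 1)) := by
          rw [hpow, inv_pow]
          field_simp
  have hIcc : (Icc 1 n0 : Finset ℕ) = Ioc 0 n0 := by
    ext x; simp; omega
  have hIccn : (Icc 1 n : Finset ℕ) = Ioc 0 n := by
    ext x; simp; omega
  set H : ℝ := ∑ k ∈ Icc 1 n0, a k * (M : ℝ)⁻¹ ^ k with hH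
  have head : ∑ k ∈ Ioc 0 n0, a k * a (n + 1 - k) ≤ H * (C * M ^ (n + 1)) := by
    rw [hH, hIcc, Finset.sum_mul]
    apply Finset.sum_le_sum
    intro k hk
    simp only [mem_Ioc] at hk
    exact key k hk.1 hk.2
  have mid : ∑ k ∈ Ioc n0 (n - n0), a k * a (n + 1 - k) ≤ (n : ℝ) * C * (C * M ^ (n + 1)) := by
    have hterm : ∀ k ∈ Ioc n0 (n - n0), a k * a (n + 1 - k) ≤ C * C * M ^ (n + 1) := by
      intro k hk
      simp only [mem_Ioc] at hk
      have h1 : a k ≤ C * M ^ k := hbd k hk.1 (by omega)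
      have h2 : a (n + 1 - k) ≤ C * M ^ (n + 1 - k) := hbd _ (by omega) (by omega)
      calc a k * a (n + 1 - k) ≤ (C * M ^ k) * (C * M ^ (n + 1 - k)) :=
            mul_le_mul h1 h2 (ha _) (by positivity)
        _ = C * C * M ^ (n + 1) := by
            rw [show C * M ^ k * (C * M ^ (n + 1 - k)) = C * C * (M ^ k * M ^ (n + 1 - k)) by ring,
              ← pow_add]
            congr 2
            omega
    calc ∑ k ∈ Ioc n0 (n - n0), a k * a (n + 1 - k)
        ≤ ∑ _k ∈ Ioc n0 (n - n0), C * C * M ^ (n + 1) := Finset.sum_le_sum hterm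
      _ = ((n - n0 - n0 : ℕ) : ℝ) * (C * C * M ^ (n + 1)) := by
          rw [Finset.sum_const, Nat.card_Ioc, nsmul_eq_mul]
      _ ≤ (n : ℝ) * C * (C * M ^ (n + 1)) := by
          have hle : ((n - n0 - n0 : ℕ) : ℝ) ≤ (n : ℝ) := by
            exact_mod_cast Nat.sub_le _ _ |>.trans (Nat.sub_le _ _)
          have hpos : (0 : ℝ) ≤ C * C * M ^ (n + 1) := by positivity
          nlinarith [mul_le_mul_of_nonneg_right hle hpos]
  have tail : ∑ k ∈ Ioc (n - n0) n, a k * a (n + 1 - k)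
      = ∑ j ∈ Ioc 0 n0, a (n + 1 - j) * a j := by
    apply Finset.sum_nbij' (i := fun k => n + 1 - k) (j := fun k => n + 1 - k)
    · intro k hk; simp only [mem_Ioc] at *; omega
    · intro k hk; simp only [mem_Ioc] at *; omega
    · intro k hk; simp only [mem_Ioc] at hk; omega
    · intro k hk; simp only [mem_Ioc] at hk; omega
    · intro k hk
      simp only [mem_Ioc] at hk
      have : n + 1 - (n + 1 - k) = k := by omega
      rw [this, mul_comm]
  have tailb : ∑ k ∈ Ioc (n - n0) n, a k * a (n + 1 - k) ≤ H * (C * M ^ (n + 1)) := by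
    rw [tail, hH, hIcc, Finset.sum_mul]
    apply Finset.sum_le_sum
    intro k hk
    simp only [mem_Ioc] at hk
    calc a (n + 1 - k) * a k = a k * a (n + 1 - k) := mul_comm _ _
      _ ≤ a k * (M : ℝ)⁻¹ ^ k * (C * M ^ (n + 1)) := key k hk.1 hk.2
  have split1 : ∑ k ∈ Ioc 0 (n - n0), a k * a (n + 1 - k)
      + ∑ k ∈ Ioc (n - n0) n, a k * a (n + 1 - k)
      = ∑ k ∈ Ioc 0 n, a k * a (n + 1 - k) :=
    Finset.sum_Ioc_consecutive _ (by omega) (by omega)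
  have split2 : ∑ k ∈ Ioc 0 n0, a k * a (n + 1 - k)
      + ∑ k ∈ Ioc n0 (n - n0), a k * a (n + 1 - k)
      = ∑ k ∈ Ioc 0 (n - n0), a k * a (n + 1 - k) :=
    Finset.sum_Ioc_consecutive _ (by omega) (by omega)
  rw [hIccn, ← split1, ← split2]
  nlinarith [head, mid, tailb]
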